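/- Let K and L be distributive lattices with L having a least element 0, let f : K → L be a lattice homomorphism, and let a, b₁, b₂ ∈ K. If the pair (f(b₁), f(b₂)) is consonant in L and f is closed at both (a,b₁) and (a,b₂), then f is closed at (a, b₁ ∨ b₂). -/
import Mathlib

/-- A lattice homomorphism `f` is *closed at* `(a, b)` if for every `z` with
`f a ≤ f b ⊔ z` there is `u` with `a ≤ b ⊔ u` and `f u ≤ z`. -/
def ClosedAt {K L : Type*} [Lattice K] [Lattice L] (f : LatticeHom K L) (a b : K) : Prop :=
  ∀ z : L, f a ≤ f b ⊔ z → ∃ u : K, a ≤ b ⊔ u ∧ f u ≤ z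

/-- A pair `(x, y)` in a lattice with bottom is *consonant* if it admits a splitting pair. -/
def Consonant {L : Type*} [Lattice L] [OrderBot L] (x y : L) : Prop :=
  ∃ u v : L, x ⊔ y = x ⊔ v ∧ x ⊔ y = u ⊔ y ∧ u ⊓ v = ⊥

theorem closedAt_sup_right {K L : Type*} [DistribLattice K] [DistribLattice L] [OrderBot L]
    (f : LatticeHom K L) (a b₁ b₂ : K)
    (hcons : Consonant (f b₁) (f b₂))
    (h₁ : ClosedAt f a b₁) (h₂ : ClosedAt f a b₂) :
    ClosedAt f a (b₁ ⊔ b₂) := by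
  obtain ⟨u, v, hv, hu, huv⟩ := hcons
  intro z hz
  rw [map_sup] at hz
  have hz1 : f a ≤ f b₁ ⊔ (v ⊔ z) := by
    calc f a ≤ f b₁ ⊔ f b₂ ⊔ z := hz
    _ = f b₁ ⊔ v ⊔ z := by rw [← hv]
    _ = f b₁ ⊔ (v ⊔ z) := sup_assoc ..
  have hz2 : f a ≤ f b₂ ⊔ (u ⊔ z) := by
    calc f a ≤ f b₁ ⊔ f b₂ ⊔ z := hz
    _ = u ⊔ f b₂ ⊔ z := by rw [← hu]
    _ = f b₂ ⊔ (u ⊔ z) := by rw [sup_comm u, sup_assoc]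
  obtain ⟨u₁, ha₁, hf₁⟩ := h₁ _ hz1
  obtain ⟨u₂, ha₂, hf₂⟩ := h₂ _ hz2
  refine ⟨u₁ ⊓ u₂, ?_, ?_⟩
  · calc a ≤ (b₁ ⊔ u₁) ⊓ (b₂ ⊔ u₂) := le_inf ha₁ ha₂
    _ ≤ (b₁ ⊔ b₂ ⊔ u₁) ⊓ (b₁ ⊔ b₂ ⊔ u₂) := by
        gcongr <;> simp [le_sup_left, le_sup_right, sup_le_iff, le_sup_of_le_left]
    _ = b₁ ⊔ b₂ ⊔ u₁ ⊓ u₂ := (sup_inf_left _ _ _).symm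
  · calc f (u₁ ⊓ u₂) = f u₁ ⊓ f u₂ := map_inf f _ _
    _ ≤ (v ⊔ z) ⊓ (u ⊔ z) := inf_le_inf hf₁ hf₂
    _ = v ⊓ u ⊔ z := (sup_inf_right _ _ _).symm
    _ = z := by rw [inf_comm, huv, bot_sup_eq]
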